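/- Let n ≥ 1, A ∈ ℂ^{n×n}, and let O ⊆ ℂ ≅ ℝ² be an open set such that for every λ ∈ O, λ is not an eigenvalue of A and the smallest eigenvalue of (λI − A)ᴴ(λI − A) is simple (attained by exactly one of the n eigenvalues counted with multiplicity). Then the function (x, y) ↦ s_n(x+iy)², assigning to (x,y) the smallest eigenvalue of (P(x+iy))ᴴP(x+iy) where P(λ) = λI − A, is differentiable at every point of O. -/

import Mathlib

open Matrix
open scoped ComplexOrder

/-- The eigenvalues (squares of the singular values) of `λI - A`, i.e. the
eigenvalues of the Hermitian matrix `(λI - A)ᴴ (λI - A)`, counted with multiplicity. -/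
noncomputable def sqSingVals {n : ℕ} (A : Matrix (Fin n) (Fin n) ℂ) (lam : ℂ) :
    Fin n → ℝ :=
  (Matrix.isHermitian_conjTranspose_mul_self
    (lam • (1 : Matrix (Fin n) (Fin n) ℂ) - A)).eigenvalues

/- ### Auxiliary lemmas -/

lemma aux_star_dotProduct_self {n : ℕ} (y : Fin n → ℂ) :
    star y ⬝ᵥ y = ((∑ i, Complex.normSq (y i) : ℝ) : ℂ) := by
  simp [dotProduct, Complex.normSq_eq_conj_mul_self, Pi.star_apply, RCLike.star_def]

lemma aux_det_sub_smul_one {n : ℕ} {M : Matrix (Fin n) (Fin n) ℂ} (hM : M.IsHermitian) (μ : ℝ) :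
    (M - (μ:ℂ) • 1).det = ∏ i, ((hM.eigenvalues i : ℂ) - (μ:ℂ)) := by
  set U : Matrix (Fin n) (Fin n) ℂ := (hM.eigenvectorUnitary : Matrix (Fin n) (Fin n) ℂ) with hUdef
  have h1 : U * star U = 1 := Matrix.mem_unitaryGroup_iff.mp hM.eigenvectorUnitary.prop
  set D : Matrix (Fin n) (Fin n) ℂ := diagonal (RCLike.ofReal ∘ hM.eigenvalues) with hDdef
  have key : M - (μ:ℂ) • 1 = U * (D - (μ:ℂ) • 1) * star U := by
    have h3 : U * ((μ:ℂ) • (1 : Matrix (Fin n) (Fin n) ℂ)) * star U = (μ:ℂ) • 1 := by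
      rw [mul_smul_comm, Matrix.mul_one, smul_mul_assoc, h1]
    conv_lhs => rw [hM.spectral_theorem, Unitary.conjStarAlgAut_apply]
    rw [Matrix.mul_sub, Matrix.sub_mul, h3]
  have h4 : (D - (μ:ℂ) • 1) = diagonal (fun i => (hM.eigenvalues i : ℂ) - (μ:ℂ)) := by
    ext i j
    rcases eq_or_ne i j with h | h <;>
      simp [hDdef, Matrix.diagonal_apply, Matrix.one_apply, h, Matrix.smul_apply]
  rw [key, Matrix.det_mul, Matrix.det_mul, mul_comm U.det _, mul_assoc, ← Matrix.det_mul, h1,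
      Matrix.det_one, mul_one, h4, Matrix.det_diagonal]

lemma aux_rayleigh_decomp {n : ℕ} {M : Matrix (Fin n) (Fin n) ℂ} (hM : M.IsHermitian)
    (x : Fin n → ℂ) :
    ∃ w : Fin n → ℝ, (∀ i, 0 ≤ w i) ∧ (∑ i, w i = ∑ i, Complex.normSq (x i)) ∧
      (star x ⬝ᵥ (M *ᵥ x)).re = ∑ i, hM.eigenvalues i * w i := by
  set U := (hM.eigenvectorUnitary : Matrix (Fin n) (Fin n) ℂ) with hU
  have h1 : U * star U = 1 := Matrix.mem_unitaryGroup_iff.mp hM.eigenvectorUnitary.prop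
  set y := star U *ᵥ x with hy
  have hsy : star y = star x ᵥ* U := by
    rw [hy, Matrix.star_mulVec, Matrix.star_eq_conjTranspose, Matrix.conjTranspose_conjTranspose]
  refine ⟨fun i => Complex.normSq (y i), fun i => Complex.normSq_nonneg _, ?_, ?_⟩
  · have e1 : star y ⬝ᵥ y = star x ⬝ᵥ x := by
      rw [hsy, hy, ← Matrix.dotProduct_mulVec, Matrix.mulVec_mulVec, h1, Matrix.one_mulVec]
    rw [aux_star_dotProduct_self, aux_star_dotProduct_self] at e1
    exact_mod_cast e1
  · have key : star x ⬝ᵥ (M *ᵥ x)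
        = star y ⬝ᵥ ((diagonal (RCLike.ofReal ∘ hM.eigenvalues) : Matrix (Fin n) (Fin n) ℂ) *ᵥ y) := by
      conv_lhs => rw [hM.spectral_theorem, Unitary.conjStarAlgAut_apply]
      rw [← Matrix.mulVec_mulVec, ← Matrix.mulVec_mulVec, Matrix.dotProduct_mulVec, ← hsy, ← hy]
    have e4 : star y ⬝ᵥ ((diagonal (RCLike.ofReal ∘ hM.eigenvalues) : Matrix (Fin n) (Fin n) ℂ) *ᵥ y)
        = ((∑ i, hM.eigenvalues i * Complex.normSq (y i) : ℝ) : ℂ) := by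
      push_cast
      rw [dotProduct]
      congr 1
      funext i
      rw [Matrix.mulVec_diagonal]
      simp only [Pi.star_apply, RCLike.star_def, Function.comp_apply]
      rw [Complex.normSq_eq_conj_mul_self]
      simp only [RCLike.ofReal_alg, Complex.real_smul]
      ring
    rw [key, e4, Complex.ofReal_re]

/-- The matrix `(z I - A)ᴴ (z I - A) - μ I` as a function of `(z, μ)`. -/
noncomputable def matF {n : ℕ} (A : Matrix (Fin n) (Fin n) ℂ) (p : ℂ × ℝ) :
    Matrix (Fin n) (Fin n) ℂ :=
  ((p.1 • 1 - A)ᴴ * (p.1 • 1 - A)) - (p.2 : ℂ) • 1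

lemma aux_contDiff_entry {n : ℕ} (A : Matrix (Fin n) (Fin n) ℂ) (i j : Fin n) :
    ContDiff ℝ ⊤ (fun p : ℂ × ℝ => matF A p i j) := by
  have hexp : (fun p : ℂ × ℝ => matF A p i j)
      = fun p : ℂ × ℝ => (∑ k, (starRingEnd ℂ) (p.1 * (1:Matrix (Fin n) (Fin n) ℂ) k i - A k i)
          * (p.1 * (1:Matrix (Fin n) (Fin n) ℂ) k j - A k j))
          - (p.2 : ℂ) * (1:Matrix (Fin n) (Fin n) ℂ) i j := by
    funext p
    simp [matF, Matrix.mul_apply, Matrix.sub_apply, Matrix.conjTranspose_apply,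
      Matrix.smul_apply, smul_eq_mul, Matrix.one_apply, apply_ite (starRingEnd ℂ), mul_comm]
    simp [eq_comm]
  rw [hexp]
  have hlin : ∀ (c : ℂ) (d : ℂ), ContDiff ℝ ⊤ (fun p : ℂ × ℝ => p.1 * c - d) :=
    fun c d => (contDiff_fst.mul contDiff_const).sub contDiff_const
  have hconj : ∀ (c d : ℂ), ContDiff ℝ ⊤ (fun p : ℂ × ℝ => (starRingEnd ℂ) (p.1 * c - d)) := by
    intro c d
    exact (Complex.conjCLE : ℂ ≃L[ℝ] ℂ).toContinuousLinearMap.contDiff.comp (hlin c d)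
  refine ContDiff.sub ?_ ?_
  · exact ContDiff.sum fun k _ => (hconj _ _).mul (hlin _ _)
  · exact (Complex.ofRealCLM.contDiff.comp contDiff_snd).mul contDiff_const

lemma aux_contDiff_fdet {n : ℕ} (A : Matrix (Fin n) (Fin n) ℂ) :
    ContDiff ℝ ⊤ (fun p : ℂ × ℝ => ((matF A p).det).re) := by
  have h : (fun p : ℂ × ℝ => ((matF A p).det).re)
      = fun p => Complex.reCLM (∑ σ : Equiv.Perm (Fin n),
          ((Equiv.Perm.sign σ : ℤ) : ℂ) * ∏ i, matF A p (σ i) i) := by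
    funext p
    rw [Matrix.det_apply']
    rfl
  rw [h]
  exact Complex.reCLM.contDiff.comp <| ContDiff.sum fun σ _ =>
    contDiff_const.mul <| contDiff_prod fun i _ => aux_contDiff_entry A (σ i) i

lemma aux_continuous_rayleigh {n : ℕ} (A : Matrix (Fin n) (Fin n) ℂ) (v : Fin n → ℂ) :
    Continuous fun z : ℂ => (star v ⬝ᵥ (matF A (z, 0) *ᵥ v)).re := by
  have hent : ∀ i j, Continuous fun z : ℂ => matF A (z, 0) i j := fun i j =>
    (aux_contDiff_entry A i j).continuous.comp (continuous_id.prodMk continuous_const)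
  have hmv : ∀ i, Continuous fun z : ℂ => (matF A (z, 0) *ᵥ v) i := by
    intro i
    simp only [Matrix.mulVec, dotProduct]
    exact continuous_finset_sum _ fun j _ => (hent i j).mul continuous_const
  refine Complex.continuous_re.comp ?_
  simp only [dotProduct]
  exact continuous_finset_sum _ fun i _ => continuous_const.mul (hmv i)

lemma aux_norm_sq_eq_sum {n : ℕ} (x : EuclideanSpace ℂ (Fin n)) :
    ‖x‖ ^ 2 = ∑ i, Complex.normSq (x i) := by
  rw [EuclideanSpace.norm_eq, Real.sq_sqrt (Finset.sum_nonneg fun i _ => sq_nonneg _)]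
  simp [Complex.sq_norm]

lemma aux_quad_eq_sum_normSq {n : ℕ} (M : Matrix (Fin n) (Fin n) ℂ) (u : Fin n → ℂ) :
    star u ⬝ᵥ ((Mᴴ * M) *ᵥ u) = ((∑ i, Complex.normSq ((M *ᵥ u) i) : ℝ) : ℂ) := by
  rw [← Matrix.mulVec_mulVec, Matrix.dotProduct_mulVec, ← Matrix.star_mulVec,
    aux_star_dotProduct_self]

lemma aux_eig_lower_bound {n : ℕ} (A : Matrix (Fin n) (Fin n) ℂ) (lam0 z : ℂ) (μ0 : ℝ)
    (hμ0 : ∀ i, μ0 ≤ sqSingVals A lam0 i) (hnn : 0 ≤ μ0) (i : Fin n) :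
    μ0 - 2 * Real.sqrt μ0 * ‖z - lam0‖ ≤ sqSingVals A z i := by
  set M : Matrix (Fin n) (Fin n) ℂ := z • 1 - A with hM
  set M0 : Matrix (Fin n) (Fin n) ℂ := lam0 • 1 - A with hM0
  set hB := Matrix.isHermitian_conjTranspose_mul_self M
  set hB0 := Matrix.isHermitian_conjTranspose_mul_self M0
  set ub : EuclideanSpace ℂ (Fin n) := hB.eigenvectorBasis i with hub
  set u : Fin n → ℂ := (WithLp.equiv 2 (Fin n → ℂ)) ub with hu
  have hunorm : ‖ub‖ = 1 := hB.eigenvectorBasis.orthonormal.1 i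
  have husum : ∑ k, Complex.normSq (u k) = 1 := by
    have := aux_norm_sq_eq_sum ub
    rw [hunorm] at this
    simpa [hu] using this.symm
  -- the eigenvalue is the squared norm of `M *ᵥ u`
  have h1 : sqSingVals A z i = ∑ k, Complex.normSq ((M *ᵥ u) k) := by
    have := hB.eigenvalues_eq i
    rw [show (Matrix.isHermitian_conjTranspose_mul_self
        (z • (1 : Matrix (Fin n) (Fin n) ℂ) - A)).eigenvalues i = hB.eigenvalues i from rfl] at *
    rw [sqSingVals]
    rw [this, show (hB.eigenvectorBasis i).ofLp = u from rfl, aux_quad_eq_sum_normSq]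
    simp [RCLike.re_to_complex]
  -- the quadratic form at `lam0` is at least `μ0`
  have h2 : μ0 ≤ ∑ k, Complex.normSq ((M0 *ᵥ u) k) := by
    obtain ⟨w, hw0, hwsum, hwre⟩ := aux_rayleigh_decomp hB0 u
    have : (star u ⬝ᵥ ((M0ᴴ * M0) *ᵥ u)).re = ∑ k, Complex.normSq ((M0 *ᵥ u) k) := by
      rw [aux_quad_eq_sum_normSq, Complex.ofReal_re]
    rw [this] at hwre
    rw [hwre]
    calc μ0 = ∑ k, μ0 * w k := by rw [← Finset.mul_sum, hwsum, husum, mul_one]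
    _ ≤ ∑ k, hB0.eigenvalues k * w k := by
        refine Finset.sum_le_sum fun k _ => mul_le_mul_of_nonneg_right ?_ (hw0 k)
        exact hμ0 k
  -- norms in Euclidean space
  set Y : EuclideanSpace ℂ (Fin n) := (WithLp.equiv 2 (Fin n → ℂ)).symm (M *ᵥ u) with hY
  set Y0 : EuclideanSpace ℂ (Fin n) := (WithLp.equiv 2 (Fin n → ℂ)).symm (M0 *ᵥ u) with hY0
  have hYsq : ‖Y‖ ^ 2 = ∑ k, Complex.normSq ((M *ᵥ u) k) := aux_norm_sq_eq_sum Y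
  have hY0sq : ‖Y0‖ ^ 2 = ∑ k, Complex.normSq ((M0 *ᵥ u) k) := aux_norm_sq_eq_sum Y0
  have hdiff : Y0 - Y = (WithLp.equiv 2 (Fin n → ℂ)).symm ((lam0 - z) • u) := by
    rw [hY, hY0]
    have : M0 *ᵥ u - M *ᵥ u = (lam0 - z) • u := by
      rw [← Matrix.sub_mulVec, hM, hM0, sub_sub_sub_cancel_right, ← sub_smul,
        Matrix.smul_mulVec, Matrix.one_mulVec]
    rw [← this]
    simp
  have hdn : ‖Y0 - Y‖ = ‖z - lam0‖ := by
    rw [hdiff]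
    have : ‖(WithLp.equiv 2 (Fin n → ℂ)).symm ((lam0 - z) • u)‖
        = ‖(lam0 - z) • ((WithLp.equiv 2 (Fin n → ℂ)).symm u)‖ := by
      congr 1
    rw [this, norm_smul]
    have : ‖(WithLp.equiv 2 (Fin n → ℂ)).symm u‖ = 1 := by
      rw [hu]
      simpa using hunorm
    rw [this, mul_one]
    rw [show lam0 - z = -(z - lam0) by ring, norm_neg]
  -- numeric part
  set a := ‖Y‖ with ha
  set b := ‖Y0‖ with hb
  set d := ‖z - lam0‖ with hd
  have hba : b - a ≤ d := by
    rw [← hdn]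
    exact (norm_sub_norm_le Y0 Y)
  have ha0 : 0 ≤ a := norm_nonneg _
  have hb0 : 0 ≤ b := norm_nonneg _
  have hd0 : 0 ≤ d := norm_nonneg _
  set sb := Real.sqrt μ0 with hsb
  have hsb0 : 0 ≤ sb := Real.sqrt_nonneg _
  have hsbsq : sb ^ 2 = μ0 := Real.sq_sqrt hnn
  have hsb_le_b : sb ≤ b := by
    have : μ0 ≤ b ^ 2 := by rw [hY0sq]; exact h2
    calc sb = Real.sqrt μ0 := rfl
    _ ≤ Real.sqrt (b ^ 2) := Real.sqrt_le_sqrt this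
    _ = b := by rw [Real.sqrt_sq hb0]
  have key : μ0 - 2 * sb * d ≤ a ^ 2 := by
    rcases le_or_gt d (a + sb) with hcase | hcase
    · nlinarith [mul_nonneg (show (0:ℝ) ≤ a + d - sb by linarith) (show (0:ℝ) ≤ a + sb - d by linarith)]
    · nlinarith [mul_nonneg hsb0 ha0, mul_nonneg hsb0 (show (0:ℝ) ≤ d - a - sb by linarith)]
  rw [h1, ← hYsq]
  exact key

set_option maxHeartbeats 2000000 in
/-- If `O ⊆ ℂ` is open and, for every `λ ∈ O`, `λ` is not an eigenvalue of `A` and the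
smallest eigenvalue of `(λI - A)ᴴ (λI - A)` is simple (attained at exactly one index),
then `λ ↦ s_n(λ)²`, the smallest eigenvalue of `(λI - A)ᴴ (λI - A)`, is (real-)
differentiable at every point of `O`. -/
theorem differentiableAt_smallest_sq_singular_value
    {n : ℕ} (hn : 1 ≤ n) (A : Matrix (Fin n) (Fin n) ℂ)
    (O : Set ℂ) (hO : IsOpen O)
    (h : ∀ lam ∈ O, lam ∉ spectrum ℂ A ∧
      (∃! i : Fin n, sqSingVals A lam i = (⨅ r, sqSingVals A lam r))) :
    ∀ lam ∈ O, DifferentiableAt ℝ (fun z : ℂ => ⨅ r, sqSingVals A z r) lam := by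
  intro lam0 hlam0
  haveI : Nonempty (Fin n) := Fin.pos_iff_nonempty.mp hn
  obtain ⟨-, i0, hi0, huniq⟩ := h lam0 hlam0
  set g : ℂ → ℝ := fun z => ⨅ r, sqSingVals A z r with hgdef
  set μ0 : ℝ := ⨅ r, sqSingVals A lam0 r with hm0def
  have hbdd : ∀ z : ℂ, ∀ i, g z ≤ sqSingVals A z i := fun z i =>
    ciInf_le (Set.Finite.bddBelow (Set.finite_range _)) i
  have hattain : ∀ z : ℂ, ∃ i, sqSingVals A z i = g z := fun z => exists_eq_ciInf_of_finite
  have hnn : 0 ≤ μ0 := by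
    rw [← hi0]
    exact (Matrix.posSemidef_conjTranspose_mul_self
      (lam0 • (1 : Matrix (Fin n) (Fin n) ℂ) - A)).eigenvalues_nonneg i0
  -- continuity of g at lam0
  have hBlam0 := Matrix.isHermitian_conjTranspose_mul_self
    (lam0 • (1 : Matrix (Fin n) (Fin n) ℂ) - A)
  set v : Fin n → ℂ := (WithLp.equiv 2 (Fin n → ℂ)) (hBlam0.eigenvectorBasis i0) with hv
  have hvsum : ∑ k, Complex.normSq (v k) = 1 := by
    have h1 : ‖hBlam0.eigenvectorBasis i0‖ = 1 := hBlam0.eigenvectorBasis.orthonormal.1 i0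
    have h2 := aux_norm_sq_eq_sum (hBlam0.eigenvectorBasis i0)
    rw [h1] at h2
    simpa [hv] using h2.symm
  set r : ℂ → ℝ := fun z => (star v ⬝ᵥ (matF A (z, 0) *ᵥ v)).re with hr
  have hmatF0 : ∀ z : ℂ, matF A (z, 0)
      = (z • (1 : Matrix (Fin n) (Fin n) ℂ) - A)ᴴ * (z • 1 - A) := by
    intro z; simp [matF]
  have hrcont : Continuous r := aux_continuous_rayleigh A v
  have hrlam0 : r lam0 = μ0 := by
    have heq := hBlam0.eigenvalues_eq i0
    simp only [RCLike.re_to_complex] at heq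
    rw [show (hBlam0.eigenvectorBasis i0).ofLp = v from rfl] at heq
    show (star v ⬝ᵥ (matF A (lam0, 0) *ᵥ v)).re = μ0
    rw [hmatF0 lam0, ← heq]
    exact hi0
  have hgr : ∀ z : ℂ, g z ≤ r z := by
    intro z
    obtain ⟨w, hw0, hwsum, hwre⟩ := aux_rayleigh_decomp
      (Matrix.isHermitian_conjTranspose_mul_self (z • (1 : Matrix (Fin n) (Fin n) ℂ) - A)) v
    have hrz : r z = ∑ k, (Matrix.isHermitian_conjTranspose_mul_self
        (z • (1 : Matrix (Fin n) (Fin n) ℂ) - A)).eigenvalues k * w k := by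
      show (star v ⬝ᵥ (matF A (z, 0) *ᵥ v)).re = _
      rw [hmatF0 z]
      exact hwre
    rw [← hwsum] at hvsum
    calc g z = ∑ k, g z * w k := by rw [← Finset.mul_sum, hvsum, mul_one]
    _ ≤ ∑ k, (Matrix.isHermitian_conjTranspose_mul_self
        (z • (1 : Matrix (Fin n) (Fin n) ℂ) - A)).eigenvalues k * w k :=
      Finset.sum_le_sum fun k _ => mul_le_mul_of_nonneg_right (hbdd z k) (hw0 k)
    _ = r z := hrz.symm
  have hlow : ∀ z : ℂ, μ0 - 2 * Real.sqrt μ0 * ‖z - lam0‖ ≤ g z := by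
    intro z
    exact le_ciInf fun i => aux_eig_lower_bound A lam0 z μ0 (fun j => hbdd lam0 j) hnn i
  have hcont : Filter.Tendsto g (nhds lam0) (nhds μ0) := by
    have hlc : Continuous fun z : ℂ => μ0 - 2 * Real.sqrt μ0 * ‖z - lam0‖ := by
      continuity
    have hlowt : Filter.Tendsto (fun z : ℂ => μ0 - 2 * Real.sqrt μ0 * ‖z - lam0‖)
        (nhds lam0) (nhds μ0) := by
      have h0 := hlc.tendsto lam0
      simpa using h0
    have hup : Filter.Tendsto r (nhds lam0) (nhds μ0) := by
      have h0 := hrcont.tendsto lam0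
      rwa [hrlam0] at h0
    exact tendsto_of_tendsto_of_tendsto_of_le_of_le hlowt hup (fun z => hlow z) (fun z => hgr z)
  -- the determinant function
  set f : ℂ × ℝ → ℝ := fun p => ((matF A p).det).re with hfdef
  have hfeig : ∀ (z : ℂ) (i : Fin n), f (z, sqSingVals A z i) = 0 := by
    intro z i
    have hdet := aux_det_sub_smul_one (Matrix.isHermitian_conjTranspose_mul_self
      (z • (1 : Matrix (Fin n) (Fin n) ℂ) - A)) (sqSingVals A z i)
    show ((matF A (z, sqSingVals A z i)).det).re = 0
    rw [show matF A (z, sqSingVals A z i)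
        = ((z • (1 : Matrix (Fin n) (Fin n) ℂ) - A)ᴴ * (z • 1 - A))
          - ((sqSingVals A z i : ℝ) : ℂ) • 1 from rfl, hdet]
    have hzero : (∏ i1, (((Matrix.isHermitian_conjTranspose_mul_self
        (z • (1 : Matrix (Fin n) (Fin n) ℂ) - A)).eigenvalues i1 : ℂ)
          - ((sqSingVals A z i : ℝ) : ℂ))) = 0 :=
      Finset.prod_eq_zero (Finset.mem_univ i) (sub_self _)
    rw [hzero]
    simp
  have hq : ∀ μ : ℝ, f (lam0, μ) = ∏ i, (sqSingVals A lam0 i - μ) := by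
    intro μ
    have hdet := aux_det_sub_smul_one (Matrix.isHermitian_conjTranspose_mul_self
      (lam0 • (1 : Matrix (Fin n) (Fin n) ℂ) - A)) μ
    show ((matF A (lam0, μ)).det).re = _
    rw [show matF A (lam0, μ)
        = ((lam0 • (1 : Matrix (Fin n) (Fin n) ℂ) - A)ᴴ * (lam0 • 1 - A))
          - (μ : ℂ) • 1 from rfl, hdet]
    rw [show (∏ i, (((Matrix.isHermitian_conjTranspose_mul_self
          (lam0 • (1 : Matrix (Fin n) (Fin n) ℂ) - A)).eigenvalues i : ℂ) - (μ : ℂ)))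
        = ((∏ i, (sqSingVals A lam0 i - μ) : ℝ) : ℂ) by push_cast; rfl]
    exact Complex.ofReal_re _
  -- derivative data
  have hcd : ContDiffAt ℝ ⊤ f (lam0, μ0) := (aux_contDiff_fdet A).contDiffAt
  obtain ⟨L, hstrict⟩ : ∃ L : (ℂ × ℝ) →L[ℝ] ℝ, HasStrictFDerivAt f L (lam0, μ0) :=
    ⟨_, hcd.hasStrictFDerivAt (by simp)⟩
  have hder1 : HasDerivAt (fun μ : ℝ => f (lam0, μ)) (L ((0 : ℂ), (1 : ℝ))) μ0 := by
    have hline : HasDerivAt (fun μ : ℝ => ((lam0, μ) : ℂ × ℝ)) ((0 : ℂ), (1 : ℝ)) μ0 :=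
      (hasDerivAt_const μ0 lam0).prodMk (hasDerivAt_id μ0)
    exact hstrict.hasFDerivAt.comp_hasDerivAt μ0 hline
  set P : ℝ → ℝ := fun μ => ∏ j ∈ Finset.univ.erase i0, (sqSingVals A lam0 j - μ) with hP
  obtain ⟨p', hp'⟩ : ∃ p', HasDerivAt P p' μ0 :=
    ⟨_, HasDerivAt.fun_finsetProd fun j _ => (hasDerivAt_id μ0).const_sub (sqSingVals A lam0 j)⟩
  have hqder : HasDerivAt (fun μ : ℝ => f (lam0, μ)) (-P μ0) μ0 := by
    have hfactor : HasDerivAt (fun μ : ℝ => (sqSingVals A lam0 i0 - μ) * P μ)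
        ((-1) * P μ0 + (sqSingVals A lam0 i0 - μ0) * p') μ0 :=
      ((hasDerivAt_id μ0).const_sub (sqSingVals A lam0 i0)).mul hp'
    have heqfun : (fun μ : ℝ => f (lam0, μ))
        = fun μ => (sqSingVals A lam0 i0 - μ) * P μ := by
      funext μ
      rw [hq μ]
      exact (Finset.mul_prod_erase Finset.univ (fun j => sqSingVals A lam0 j - μ)
        (Finset.mem_univ i0)).symm
    rw [heqfun]
    convert hfactor using 1
    rw [hi0, sub_self, zero_mul, add_zero]
    ring
  set c : ℝ := L ((0 : ℂ), (1 : ℝ)) with hcdef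
  have hc : c ≠ 0 := by
    have hL01 : c = -P μ0 := hder1.unique hqder
    rw [hL01, neg_ne_zero, hP]
    refine Finset.prod_ne_zero_iff.mpr fun j hj => ?_
    have hjne : j ≠ i0 := (Finset.mem_erase.mp hj).1
    intro h0
    exact hjne (huniq j (sub_eq_zero.mp h0))
  have hLsplit : ∀ (dz : ℂ) (dμ : ℝ), L (dz, dμ) = L (dz, 0) + dμ * c := by
    intro dz dμ
    have h1 : ((dz, dμ) : ℂ × ℝ) = (dz, 0) + dμ • ((0 : ℂ), (1 : ℝ)) := by
      simp [Prod.ext_iff]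
    rw [h1, L.map_add, L.map_smul, smul_eq_mul, hcdef]
  set fstL : (ℂ × ℝ) →L[ℝ] ℂ := ContinuousLinearMap.fst ℝ ℂ ℝ with hfst
  set sndL : (ℂ × ℝ) →L[ℝ] ℝ := ContinuousLinearMap.snd ℝ ℂ ℝ with hsnd
  set D1 : (ℂ × ℝ) →L[ℝ] (ℂ × ℝ) := fstL.prod L with hD1
  set D2 : (ℂ × ℝ) →L[ℝ] (ℂ × ℝ)
    := fstL.prod (c⁻¹ • (sndL - L.comp (fstL.prod 0))) with hD2
  have happly1 : ∀ (dz : ℂ) (dμ : ℝ), D1 (dz, dμ) = (dz, L (dz, dμ)) := by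
    intro dz dμ
    simp [hD1, hfst, ContinuousLinearMap.prod_apply]
  have happly2 : ∀ (dz : ℂ) (t : ℝ), D2 (dz, t) = (dz, c⁻¹ * (t - L (dz, 0))) := by
    intro dz t
    simp [hD2, hfst, hsnd, ContinuousLinearMap.prod_apply, ContinuousLinearMap.smul_apply,
      ContinuousLinearMap.sub_apply, ContinuousLinearMap.comp_apply,
      ContinuousLinearMap.zero_apply, smul_eq_mul]
  have hleft : Function.LeftInverse D2 D1 := by
    intro p
    obtain ⟨dz, dμ⟩ := p
    rw [happly1, happly2, Prod.mk.injEq]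
    refine ⟨rfl, ?_⟩
    rw [hLsplit dz dμ, add_sub_cancel_left]
    field_simp
  have hright : Function.RightInverse D2 D1 := by
    intro p
    obtain ⟨dz, t⟩ := p
    rw [happly2, happly1, Prod.mk.injEq]
    refine ⟨rfl, ?_⟩
    rw [hLsplit dz _]
    field_simp
    ring
  set D : (ℂ × ℝ) ≃L[ℝ] (ℂ × ℝ) := ContinuousLinearEquiv.equivOfInverse D1 D2 hleft hright
    with hDeq
  set G : ℂ × ℝ → ℂ × ℝ := fun p => (p.1, f p) with hGdef
  have hGstrict : HasStrictFDerivAt G (D : (ℂ × ℝ) →L[ℝ] (ℂ × ℝ)) (lam0, μ0) := by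
    have hcoe : (D : (ℂ × ℝ) →L[ℝ] (ℂ × ℝ)) = D1 := rfl
    rw [hcoe, hD1, hfst]
    exact ((ContinuousLinearMap.fst ℝ ℂ ℝ).hasStrictFDerivAt).prodMk hstrict
  have hG0 : G (lam0, μ0) = (lam0, 0) := by
    rw [hGdef]
    simp only
    rw [show f (lam0, μ0) = 0 from by rw [← hi0]; exact hfeig lam0 i0]
  set ψ := hGstrict.localInverse G D (lam0, μ0) with hψdef
  have hψstrict := hGstrict.to_localInverse
  have hψdiff : DifferentiableAt ℝ ψ (lam0, 0) := by
    rw [← hG0]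
    exact hψstrict.differentiableAt
  have hφdiff : DifferentiableAt ℝ (fun z : ℂ => (ψ (z, 0)).2) lam0 := by
    have hinner : DifferentiableAt ℝ (fun z : ℂ => ((z, (0 : ℝ)) : ℂ × ℝ)) lam0 :=
      differentiableAt_id.prodMk (differentiableAt_const 0)
    exact (differentiable_snd.differentiableAt).comp lam0 (hψdiff.comp lam0 hinner)
  have hev : g =ᶠ[nhds lam0] (fun z => (ψ (z, 0)).2) := by
    have h1 : Filter.Tendsto (fun z : ℂ => ((z, g z) : ℂ × ℝ)) (nhds lam0)
        (nhds ((lam0, μ0) : ℂ × ℝ)) := by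
      rw [nhds_prod_eq]
      exact Filter.Tendsto.prodMk Filter.tendsto_id hcont
    have h2 := h1.eventually hGstrict.eventually_left_inverse
    filter_upwards [h2] with z hz
    have hGz : G (z, g z) = (z, 0) := by
      obtain ⟨iz, hiz⟩ := hattain z
      rw [hGdef]
      simp only
      rw [show f (z, g z) = 0 from by rw [← hiz]; exact hfeig z iz]
    rw [hGz] at hz
    show g z = (ψ (z, 0)).2
    exact (congrArg Prod.snd hz).symm
  exact (Filter.EventuallyEq.differentiableAt_iff hev).mpr hφdiff
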